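/- For every b > 0 and every function F : ℝ → ℝ, the frequency polygon B_b F : ℝ → ℝ is continuous on all of ℝ. -/

import Mathlib

open Filter MeasureTheory ProbabilityTheory

/-- The binning (histogram) operator: `A_b F (x) = (F((k+1)b) - F(kb))/b` for
`x ∈ [kb, (k+1)b)`, where `k = ⌊x/b⌋`. -/
noncomputable def abin (b : ℝ) (F : ℝ → ℝ) (x : ℝ) : ℝ :=
  (F (((⌊x / b⌋ : ℝ) + 1) * b) - F ((⌊x / b⌋ : ℝ) * b)) / b

/-- The interpolation weight `u_b(x) = x/b - (⌊x/b - 1/2⌋ + ⌊x/b + 1/2⌋)/2`. -/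
noncomputable def ub (b x : ℝ) : ℝ :=
  x / b - ((⌊x / b - 1 / 2⌋ : ℝ) + (⌊x / b + 1 / 2⌋ : ℝ)) / 2

/-- The frequency polygon operator
`B_b F (x) = (1 - u_b(x)) A_b F (x - b/2) + u_b(x) A_b F (x + b/2)`. -/
noncomputable def bfp (b : ℝ) (F : ℝ → ℝ) (x : ℝ) : ℝ :=
  (1 - ub b x) * abin b F (x - b / 2) + ub b x * abin b F (x + b / 2)

/-- Slope of `F` over the interval `[(n-1)b, nb]`. -/
noncomputable def fpslope (b : ℝ) (F : ℝ → ℝ) (n : ℤ) : ℝ :=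
  (F ((n : ℝ) * b) - F (((n : ℝ) - 1) * b)) / b

/-- Piecewise-linear interpolant of `fpslope` over the integers. -/
noncomputable def fpg (b : ℝ) (F : ℝ → ℝ) (s : ℝ) : ℝ :=
  (1 - Int.fract s) * fpslope b F ⌊s⌋ + Int.fract s * fpslope b F (⌊s⌋ + 1)

lemma fpg_eqOn (b : ℝ) (F : ℝ → ℝ) (n : ℤ) :
    Set.EqOn (fpg b F)
      (fun s => fpslope b F n + (s - n) * (fpslope b F (n + 1) - fpslope b F n))
      (Set.Icc (n : ℝ) ((n : ℝ) + 1)) := by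
  intro s hs
  rcases eq_or_lt_of_le hs.2 with h | h
  · subst h
    have hfl : ⌊(n : ℝ) + 1⌋ = n + 1 := by
      rw [show ((n : ℝ) + 1) = ((n + 1 : ℤ) : ℝ) by push_cast; ring, Int.floor_intCast]
    simp only [fpg, hfl, Int.fract]
    push_cast
    ring
  · have hfl : ⌊s⌋ = n := Int.floor_eq_iff.2 ⟨hs.1, h⟩
    have hfr : Int.fract s = s - n := by rw [Int.fract, hfl]
    simp only [fpg, hfl, hfr]
    ring

lemma fpg_continuousOn (b : ℝ) (F : ℝ → ℝ) (n : ℤ) :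
    ContinuousOn (fpg b F) (Set.Icc (n : ℝ) ((n : ℝ) + 1)) := by
  refine ContinuousOn.congr ?_ (fpg_eqOn b F n)
  exact (continuous_const.add (((continuous_id.sub continuous_const)).mul
    continuous_const)).continuousOn

lemma fpg_continuous (b : ℝ) (F : ℝ → ℝ) : Continuous (fpg b F) := by
  refine continuous_iff_continuousAt.2 fun x => ?_
  set n : ℤ := ⌊x⌋ with hn
  have hx1 : (n : ℝ) ≤ x := Int.floor_le x
  have hx2 : x < (n : ℝ) + 1 := Int.lt_floor_add_one x
  have h1 : ContinuousOn (fpg b F) (Set.Icc ((n : ℝ) - 1) (n : ℝ)) := by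
    have := fpg_continuousOn b F (n - 1)
    push_cast at this
    simpa using this
  have h2 : ContinuousOn (fpg b F) (Set.Icc (n : ℝ) ((n : ℝ) + 1)) :=
    fpg_continuousOn b F n
  have cwa1 : ContinuousWithinAt (fpg b F) (Set.Icc ((n : ℝ) - 1) (n : ℝ)) x := by
    rcases eq_or_lt_of_le hx1 with h | h
    · exact h1.continuousWithinAt ⟨by linarith, le_of_eq h.symm⟩
    · refine continuousWithinAt_of_notMem_closure ?_
      rw [isClosed_Icc.closure_eq]
      intro hmem
      exact absurd hmem.2 (not_le.2 h)
  have cwa2 : ContinuousWithinAt (fpg b F) (Set.Icc (n : ℝ) ((n : ℝ) + 1)) x :=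
    h2.continuousWithinAt ⟨hx1, hx2.le⟩
  have cwa : ContinuousWithinAt (fpg b F)
      (Set.Icc ((n : ℝ) - 1) (n : ℝ) ∪ Set.Icc (n : ℝ) ((n : ℝ) + 1)) x :=
    cwa1.union cwa2
  have hcup : Set.Icc ((n : ℝ) - 1) (n : ℝ) ∪ Set.Icc (n : ℝ) ((n : ℝ) + 1)
      = Set.Icc ((n : ℝ) - 1) ((n : ℝ) + 1) :=
    Set.Icc_union_Icc_eq_Icc (by linarith) (by linarith)
  rw [hcup] at cwa
  exact cwa.continuousAt (Icc_mem_nhds (by linarith) (by linarith))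

theorem frequency_polygon_continuous (b : ℝ) (hb : 0 < b) (F : ℝ → ℝ) :
    Continuous (bfp b F) := by
  have hb' : b ≠ 0 := hb.ne'
  have key : bfp b F = fun x => fpg b F (x / b + 1 / 2) := by
    funext x
    have h1 : (x - b / 2) / b = x / b + 1 / 2 - 1 := by field_simp; ring
    have h2 : (x + b / 2) / b = x / b + 1 / 2 := by field_simp
    have h3 : x / b - 1 / 2 = x / b + 1 / 2 - 1 := by ring
    set s : ℝ := x / b + 1 / 2 with hs
    have hf1 : ⌊s - 1⌋ = ⌊s⌋ - 1 := by
      have := Int.floor_sub_intCast s 1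
      exact_mod_cast this
    simp only [bfp, abin, ub, fpg, fpslope, h1, h2, h3, hf1, Int.fract]
    push_cast
    have hx : x / b = s - 1 / 2 := by rw [hs]; ring
    rw [hx]
    ring_nf
  rw [key]
  exact (fpg_continuous b F).comp ((continuous_id.div_const b).add continuous_const)
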